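/- Let 0 < r_i < r_e and set ρ = r_i/r_e ∈ (0,1). For an integer n ≥ 2 and δ > 0, define c_n = (n+2)²/(n−1)², ε_n = −1 − 3/(n−1), ξ₁ⁿ = 3/(4n+2), a_{1,δ} = (c_n + ε_n + iδ)/(2(c_n − ε_n − iδ)) ∈ ℂ and a_{2,δ} = (1 + ε_n + iδ)/(2(−1 + ε_n + iδ)) ∈ ℂ. Then there exist constants C₁, C₂ > 0, depending only on ρ, such that for all integers n ≥ 2 and all δ ∈ (0,1): C₁ (δ² + ρ^{2n}) ≤ | (ξ₁ⁿ − a_{1,δ})(ξ₁ⁿ − a_{2,δ}) + ((n−1)(n+2)/(2n+1)²) ρ^{2n+1} | ≤ C₂ (δ² + ρ^{2n}). -/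

import Mathlib

open Complex

set_option maxHeartbeats 2000000 in
/-- with `ρ = r_i/r_e ∈ (0,1)`, `c_n = (n+2)²/(n−1)²`, `ε_n = −1 − 3/(n−1)`,
`ξ₁ⁿ = 3/(4n+2)`, `a_{1,δ} = (c_n + ε_n + iδ)/(2(c_n − ε_n − iδ))` and
`a_{2,δ} = (1 + ε_n + iδ)/(2(−1 + ε_n + iδ))`, there are constants `C₁, C₂ > 0` depending
only on `ρ` such that for all `n ≥ 2` and `δ ∈ (0,1)`,
`C₁ (δ² + ρ^{2n}) ≤ |(ξ₁ⁿ − a_{1,δ})(ξ₁ⁿ − a_{2,δ}) + ((n−1)(n+2)/(2n+1)²) ρ^{2n+1}|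
  ≤ C₂ (δ² + ρ^{2n})`. -/
theorem denominator_two_sided_estimate (ri re : ℝ) (hri : 0 < ri) (hre : ri < re) :
    ∃ C₁ C₂ : ℝ, 0 < C₁ ∧ 0 < C₂ ∧
      ∀ n : ℕ, 2 ≤ n → ∀ δ : ℝ, 0 < δ → δ < 1 →
        let ρ : ℝ := ri / re
        let cn : ℝ := ((n : ℝ) + 2) ^ 2 / ((n : ℝ) - 1) ^ 2
        let εn : ℝ := -1 - 3 / ((n : ℝ) - 1)
        let ξ : ℂ := 3 / (4 * (n : ℂ) + 2)
        let a₁ : ℂ := ((cn : ℂ) + (εn : ℂ) + δ * Complex.I) /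
          (2 * ((cn : ℂ) - (εn : ℂ) - δ * Complex.I))
        let a₂ : ℂ := (1 + (εn : ℂ) + δ * Complex.I) /
          (2 * (-1 + (εn : ℂ) + δ * Complex.I))
        C₁ * (δ ^ 2 + ρ ^ (2 * n)) ≤
          ‖(ξ - a₁) * (ξ - a₂) +
            (((n : ℂ) - 1) * ((n : ℂ) + 2) / (2 * (n : ℂ) + 1) ^ 2) * (ρ : ℂ) ^ (2 * n + 1)‖ ∧
        ‖(ξ - a₁) * (ξ - a₂) +
            (((n : ℂ) - 1) * ((n : ℂ) + 2) / (2 * (n : ℂ) + 1) ^ 2) * (ρ : ℂ) ^ (2 * n + 1)‖ ≤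
          C₂ * (δ ^ 2 + ρ ^ (2 * n)) := by
  have hre0 : 0 < re := lt_trans hri hre
  have hρ0' : 0 < ri / re := div_pos hri hre0
  have hρ1' : ri / re < 1 := (div_lt_one hre0).2 hre
  refine ⟨min (1/100000) ((ri/re)/10), 1, lt_min (by norm_num) (by positivity), one_pos, ?_⟩
  intro n hn δ hδ0 hδ1
  intro ρ cn εn ξ a₁ a₂
  have hρr : ρ = ri / re := rfl
  have hρ0 : 0 < ρ := hρ0'
  have hρ1 : ρ < 1 := hρ1'
  have hδne : δ ≠ 0 := ne_of_gt hδ0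
  have hN : (2:ℝ) ≤ (n:ℝ) := by exact_mod_cast hn
  obtain ⟨s, hsdef⟩ : ∃ s : ℝ, s = ((n:ℝ)+2)/((n:ℝ)-1) := ⟨_, rfl⟩
  have hnR : ((n:ℝ)-1) ≠ 0 := by linarith
  have hnC : ((n:ℂ) - 1) ≠ 0 := by
    have := Complex.ofReal_ne_zero.2 hnR
    push_cast at this; exact this
  have h4n : (4*(n:ℂ)+2) ≠ 0 := by
    have h : (4*(n:ℝ)+2) ≠ 0 := by linarith
    have := Complex.ofReal_ne_zero.2 h
    push_cast at this; exact this
  have hs1 : 1 < s := by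
    rw [hsdef, lt_div_iff₀ (by linarith)]; linarith
  have hs4 : s ≤ 4 := by
    rw [hsdef, div_le_iff₀ (by linarith)]; linarith
  have hwsum : ((s:ℂ)+1) ≠ 0 := by
    have h : (s+1 : ℝ) ≠ 0 := by linarith
    have := Complex.ofReal_ne_zero.2 h
    push_cast at this; exact this
  have hsC : (s:ℂ) = ((n:ℂ)+2)/((n:ℂ)-1) := by
    rw [hsdef]; push_cast; ring
  have hξC : (3 : ℂ)/(4*(n:ℂ)+2) = ((s:ℂ)-1)/(2*((s:ℂ)+1)) := by
    rw [div_eq_div_iff h4n (mul_ne_zero two_ne_zero hwsum), hsC]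
    field_simp
    ring
  have hcnC : ((cn : ℝ) : ℂ) = (s:ℂ)^2 := by
    have h : cn = s^2 := by
      show ((n:ℝ)+2)^2/((n:ℝ)-1)^2 = s^2
      rw [hsdef, div_pow]
    rw [h]; push_cast; ring
  have hεnC : ((εn : ℝ) : ℂ) = -(s:ℂ) := by
    have h : εn = -s := by
      show -1 - 3/((n:ℝ)-1) = -s
      rw [hsdef]
      field_simp
      ring
    rw [h]; push_cast; ring
  -- nonvanishing complex denominators
  have hd1 : ((s:ℂ)^2 + (s:ℂ) - (δ:ℂ)*Complex.I) ≠ 0 := by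
    intro h
    have := congrArg Complex.im h
    simp [← Complex.ofReal_pow] at this
    exact hδne this
  have hd1' : ((s:ℂ)^2 - (-(s:ℂ)) - (δ:ℂ)*Complex.I) ≠ 0 := by
    rw [show ((s:ℂ)^2 - (-(s:ℂ)) - (δ:ℂ)*Complex.I) = ((s:ℂ)^2 + (s:ℂ) - (δ:ℂ)*Complex.I) by ring]
    exact hd1
  have hd1'' : ((s:ℂ)*((s:ℂ)+1) - (δ:ℂ)*Complex.I) ≠ 0 := by
    rw [show ((s:ℂ)*((s:ℂ)+1) - (δ:ℂ)*Complex.I) = ((s:ℂ)^2 + (s:ℂ) - (δ:ℂ)*Complex.I) by ring]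
    exact hd1
  have hd2 : (-((s:ℂ)+1) + (δ:ℂ)*Complex.I) ≠ 0 := by
    intro h
    have := congrArg Complex.im h
    simp at this
    exact hδne this
  have hd2' : (-1 + (-(s:ℂ)) + (δ:ℂ)*Complex.I) ≠ 0 := by
    rw [show (-1 + (-(s:ℂ)) + (δ:ℂ)*Complex.I) = (-((s:ℂ)+1) + (δ:ℂ)*Complex.I) by ring]
    exact hd2
  -- factor identities
  have h1 : ((s:ℂ)-1)/(2*((s:ℂ)+1)) - ((s:ℂ)^2 + (-(s:ℂ)) + δ * Complex.I) /
          (2 * ((s:ℂ)^2 - (-(s:ℂ)) - δ * Complex.I))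
      = -(δ:ℂ)*Complex.I*(s:ℂ)/(((s:ℂ)+1)*((s:ℂ)*((s:ℂ)+1) - (δ:ℂ)*Complex.I)) := by
    rw [div_sub_div _ _ (mul_ne_zero two_ne_zero hwsum) (mul_ne_zero two_ne_zero hd1'),
      div_eq_div_iff (mul_ne_zero (mul_ne_zero two_ne_zero hwsum) (mul_ne_zero two_ne_zero hd1'))
        (mul_ne_zero hwsum hd1'')]
    ring
  have h2 : ((s:ℂ)-1)/(2*((s:ℂ)+1)) - (1 + (-(s:ℂ)) + δ * Complex.I) /
          (2 * (-1 + (-(s:ℂ)) + δ * Complex.I))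
      = (δ:ℂ)*Complex.I/((-((s:ℂ)+1))*(-((s:ℂ)+1) + (δ:ℂ)*Complex.I)) := by
    rw [div_sub_div _ _ (mul_ne_zero two_ne_zero hwsum) (mul_ne_zero two_ne_zero hd2'),
      div_eq_div_iff (mul_ne_zero (mul_ne_zero two_ne_zero hwsum) (mul_ne_zero two_ne_zero hd2'))
        (mul_ne_zero (neg_ne_zero.2 hwsum) hd2)]
    ring
  -- the explicit denominator in a+bi form
  obtain ⟨Dc, hDcdef⟩ : ∃ D : ℂ,
      D = ((δ^2 - s*(s+1)^2 : ℝ) : ℂ) + (((s+1)^2*δ : ℝ):ℂ)*Complex.I := ⟨_, rfl⟩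
  have hnum : (-(δ:ℂ)*Complex.I*(s:ℂ)) * ((δ:ℂ)*Complex.I) = ((δ^2*s : ℝ):ℂ) := by
    push_cast
    linear_combination (-(δ:ℂ)^2*(s:ℂ)) * Complex.I_sq
  have hden : ((((s:ℂ)+1))*((s:ℂ)*((s:ℂ)+1) - (δ:ℂ)*Complex.I)) *
        ((-((s:ℂ)+1))*(-((s:ℂ)+1) + (δ:ℂ)*Complex.I))
      = -((((s+1)^2 : ℝ):ℂ) * Dc) := by
    rw [hDcdef]
    push_cast
    linear_combination (((s:ℂ)+1)^2*(δ:ℂ)^2) * Complex.I_sq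
  obtain ⟨T, hTdef⟩ : ∃ T : ℝ,
      T = ((n:ℝ)-1)*((n:ℝ)+2)/(2*(n:ℝ)+1)^2 * ρ^(2*n+1) := ⟨_, rfl⟩
  have hT : (((n : ℂ) - 1) * ((n : ℂ) + 2) / (2 * (n : ℂ) + 1) ^ 2) * ((ρ:ℝ) : ℂ) ^ (2 * n + 1)
      = ((T : ℝ) : ℂ) := by
    rw [hTdef]; push_cast; ring
  -- grand identity
  have hz : (ξ - a₁) * (ξ - a₂) +
        (((n : ℂ) - 1) * ((n : ℂ) + 2) / (2 * (n : ℂ) + 1) ^ 2) * ((ρ:ℝ) : ℂ) ^ (2 * n + 1)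
      = -(((δ^2*s : ℝ):ℂ))/((((s+1)^2 : ℝ):ℂ) * Dc) + ((T : ℝ) : ℂ) := by
    rw [show ξ = 3 / (4 * (n : ℂ) + 2) from rfl,
      show a₁ = ((cn : ℂ) + (εn : ℂ) + δ * Complex.I) /
        (2 * ((cn : ℂ) - (εn : ℂ) - δ * Complex.I)) from rfl,
      show a₂ = (1 + (εn : ℂ) + δ * Complex.I) /
        (2 * (-1 + (εn : ℂ) + δ * Complex.I)) from rfl,
      hcnC, hεnC, hξC, hT, h1, h2, div_mul_div_comm, hnum, hden, div_neg, neg_div]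
  rw [hz]
  -- complex component facts (before clearing)
  have hDcre : Dc.re = δ^2 - s*(s+1)^2 := by
    rw [hDcdef]
    simp only [Complex.add_re, Complex.ofReal_re, Complex.mul_re, Complex.ofReal_im,
      Complex.I_re, Complex.I_im]
    ring
  have hDcim : Dc.im = (s+1)^2*δ := by
    rw [hDcdef]
    simp only [Complex.add_im, Complex.ofReal_im, Complex.mul_im, Complex.ofReal_re,
      Complex.I_re, Complex.I_im]
    ring
  clear hz hT h1 h2 hnum hden hd1 hd1' hd1'' hd2 hd2' hsC hξC hcnC hεnC hnC h4n hwsum hsdef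
  clear hDcdef hδne hnR
  clear_value ρ
  clear cn εn ξ a₁ a₂
  -- real inequalities
  have hδ2 : δ^2 ≤ 1 := by nlinarith
  have hB2lo : 4 ≤ (s+1)^2 := by nlinarith
  have hB2hi : (s+1)^2 ≤ 25 := by nlinarith
  have hABlo : 4 ≤ s*(s+1)^2 := by nlinarith
  have hABhi : s*(s+1)^2 ≤ 100 := by nlinarith
  have hDrele : δ^2 - s*(s+1)^2 ≤ -3 := by nlinarith
  have hXlo : -100 ≤ δ^2 - s*(s+1)^2 := by nlinarith
  have hQ1 : (δ^2 - s*(s+1)^2)^2 ≤ 10000 := by nlinarith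
  have hQ2 : ((s+1)^2*δ)^2 ≤ 625 := by nlinarith [sq_nonneg δ, sq_nonneg ((s+1)^2)]
  have hQhi : (δ^2 - s*(s+1)^2)^2 + ((s+1)^2*δ)^2 ≤ 10625 := by linarith
  have hQpos : 0 < (δ^2 - s*(s+1)^2)^2 + ((s+1)^2*δ)^2 := by nlinarith
  have hnormsq : Complex.normSq Dc = (δ^2 - s*(s+1)^2)^2 + ((s+1)^2*δ)^2 := by
    rw [Complex.normSq_apply, hDcre, hDcim]; ring
  have habsDc : 3 ≤ ‖Dc‖ := by
    have h := Complex.abs_re_le_norm Dc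
    rw [hDcre, abs_of_neg (by nlinarith : δ^2 - s*(s+1)^2 < 0)] at h
    linarith
  have habsDc0 : 0 < ‖Dc‖ := by linarith
  have hB2pos : (0:ℝ) < (s+1)^2 := by linarith
  -- abs of the first summand
  have habs1 : ‖(-(((δ^2*s : ℝ):ℂ))/((((s+1)^2 : ℝ):ℂ) * Dc))‖
      = (δ^2*s)/((s+1)^2 * ‖Dc‖) := by
    rw [norm_div, norm_mul, norm_neg, Complex.norm_real, Complex.norm_real,
      Real.norm_eq_abs, Real.norm_eq_abs,
      _root_.abs_of_nonneg (mul_nonneg (sq_nonneg δ) (by linarith : (0:ℝ) ≤ s)),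
      _root_.abs_of_nonneg (le_of_lt hB2pos)]
  have hTnonneg : 0 ≤ T := by
    rw [hTdef]
    apply mul_nonneg
    · apply div_nonneg (by nlinarith) (by positivity)
    · exact pow_nonneg hρ0.le _
  constructor
  · -- lower bound
    have hrw : (-(((δ^2*s : ℝ):ℂ))/((((s+1)^2 : ℝ):ℂ) * Dc))
        = ((-(δ^2*s)/(s+1)^2 : ℝ) : ℂ) * Dc⁻¹ := by
      rw [Complex.ofReal_div, Complex.ofReal_neg, div_mul_eq_div_div, div_eq_mul_inv]
    have hfre : (-(((δ^2*s : ℝ):ℂ))/((((s+1)^2 : ℝ):ℂ) * Dc)).re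
        = (-(δ^2*s)/(s+1)^2) * ((δ^2 - s*(s+1)^2) /
            ((δ^2 - s*(s+1)^2)^2 + ((s+1)^2*δ)^2)) := by
      rw [hrw, Complex.re_ofReal_mul, Complex.inv_re, hDcre, hnormsq]
    have hzre : (-(((δ^2*s : ℝ):ℂ))/((((s+1)^2 : ℝ):ℂ) * Dc) + ((T : ℝ) : ℂ)).re
        = (-(δ^2*s)/(s+1)^2) * ((δ^2 - s*(s+1)^2) /
            ((δ^2 - s*(s+1)^2)^2 + ((s+1)^2*δ)^2)) + T := by
      rw [Complex.add_re, hfre, Complex.ofReal_re]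
    have key1 : δ^2/100000 ≤ (-(δ^2*s)/(s+1)^2) * ((δ^2 - s*(s+1)^2) /
        ((δ^2 - s*(s+1)^2)^2 + ((s+1)^2*δ)^2)) := by
      have heq : (-(δ^2*s)/(s+1)^2) * ((δ^2 - s*(s+1)^2) /
          ((δ^2 - s*(s+1)^2)^2 + ((s+1)^2*δ)^2))
          = (δ^2*(s*(s*(s+1)^2 - δ^2)))/((s+1)^2*((δ^2 - s*(s+1)^2)^2 + ((s+1)^2*δ)^2)) := by
        rw [div_mul_div_comm]
        rw [div_eq_div_iff (by positivity) (by positivity)]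
        ring
      rw [heq, div_le_div_iff₀ (by norm_num) (mul_pos hB2pos hQpos)]
      have hA : (s+1)^2*((δ^2 - s*(s+1)^2)^2 + ((s+1)^2*δ)^2) ≤ 265625 :=
        le_trans (mul_le_mul hB2hi hQhi (le_of_lt hQpos) (by norm_num)) (by norm_num)
      have hB : 3 ≤ s*(s*(s+1)^2 - δ^2) := by nlinarith
      nlinarith [mul_le_mul_of_nonneg_left hA (sq_nonneg δ),
        mul_le_mul_of_nonneg_left hB (sq_nonneg δ)]
    have key2 : ρ/10*ρ^(2*n) ≤ T := by
      have ht2 : 1/10 ≤ ((n:ℝ)-1)*((n:ℝ)+2)/(2*(n:ℝ)+1)^2 := by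
        rw [le_div_iff₀ (by positivity)]; nlinarith
      have hTeq : T = (((n:ℝ)-1)*((n:ℝ)+2)/(2*(n:ℝ)+1)^2) * (ρ^(2*n)*ρ) := by
        rw [hTdef, pow_succ ρ (2*n)]
      rw [hTeq]
      calc ρ/10*ρ^(2*n) = 1/10*(ρ^(2*n)*ρ) := by ring
        _ ≤ (((n:ℝ)-1)*((n:ℝ)+2)/(2*(n:ℝ)+1)^2) * (ρ^(2*n)*ρ) :=
          mul_le_mul_of_nonneg_right ht2 (mul_nonneg (pow_nonneg hρ0.le _) hρ0.le)
    have hmin1 : min (1/100000 : ℝ) ((ri/re)/10) ≤ 1/100000 := min_le_left _ _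
    have hmin2 : min (1/100000 : ℝ) ((ri/re)/10) ≤ ρ/10 := by
      rw [hρr]; exact min_le_right _ _
    calc min (1/100000 : ℝ) ((ri/re)/10) * (δ ^ 2 + ρ ^ (2 * n))
        = min (1/100000 : ℝ) ((ri/re)/10) * δ^2 + min (1/100000 : ℝ) ((ri/re)/10) * ρ^(2*n) := by
          ring
      _ ≤ (1/100000)*δ^2 + (ρ/10)*ρ^(2*n) :=
          add_le_add (mul_le_mul_of_nonneg_right hmin1 (sq_nonneg δ))
            (mul_le_mul_of_nonneg_right hmin2 (pow_nonneg hρ0.le _))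
      _ ≤ (-(((δ^2*s : ℝ):ℂ))/((((s+1)^2 : ℝ):ℂ) * Dc) + ((T : ℝ) : ℂ)).re := by
          rw [hzre]
          have h100 : (1/100000 : ℝ)*δ^2 = δ^2/100000 := by ring
          linarith [key1, key2]
      _ ≤ ‖(-(((δ^2*s : ℝ):ℂ))/((((s+1)^2 : ℝ):ℂ) * Dc) + ((T : ℝ) : ℂ))‖ :=
          Complex.re_le_norm _
  · -- upper bound
    have hup1 : (δ^2*s)/((s+1)^2 * ‖Dc‖) ≤ δ^2 := by
      rw [div_le_iff₀ (mul_pos hB2pos habsDc0)]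
      have h12' : (4:ℝ)*3 ≤ (s+1)^2*‖Dc‖ :=
        mul_le_mul hB2lo habsDc (by norm_num) (by linarith)
      have h12 : s ≤ (s+1)^2*‖Dc‖ := by linarith
      exact mul_le_mul_of_nonneg_left h12 (sq_nonneg δ)
    have hup2 : T ≤ ρ^(2*n) := by
      have ht1 : ((n:ℝ)-1)*((n:ℝ)+2)/(2*(n:ℝ)+1)^2 ≤ 1 := by
        rw [div_le_one (by positivity)]; nlinarith
      have hpow : ρ^(2*n+1) ≤ ρ^(2*n) := pow_le_pow_of_le_one hρ0.le hρ1.le (by omega)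
      calc T ≤ 1 * ρ^(2*n) := by
            rw [hTdef]
            exact mul_le_mul ht1 hpow (pow_nonneg hρ0.le _) one_pos.le
        _ = ρ^(2*n) := one_mul _
    calc ‖(-(((δ^2*s : ℝ):ℂ))/((((s+1)^2 : ℝ):ℂ) * Dc) + ((T : ℝ) : ℂ))‖
        ≤ ‖(-(((δ^2*s : ℝ):ℂ))/((((s+1)^2 : ℝ):ℂ) * Dc))‖ + ‖(((T : ℝ) : ℂ))‖ :=
          norm_add_le _ _
      _ = (δ^2*s)/((s+1)^2 * ‖Dc‖) + T := by
          rw [habs1, Complex.norm_real, Real.norm_eq_abs, _root_.abs_of_nonneg hTnonneg]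
      _ ≤ δ^2 + ρ^(2*n) := add_le_add hup1 hup2
      _ = 1 * (δ^2 + ρ^(2*n)) := (one_mul _).symm
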